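/- If Condition N holds at a point ξ : E, then Condition Kolmogorov holds at ξ or Condition Iso-energetic holds at ξ. -/
import Mathlib

/-- Condition N at `ξ` implies Condition Kolmogorov at `ξ` or Condition Iso-energetic at `ξ`. -/
theorem N_implies_kolmogorov_or_isoenergetic (d : ℕ) (hd : 1 ≤ d)
    (F : EuclideanSpace ℝ (Fin d) → ℝ) (hF : ContDiff ℝ 2 F)
    (ξ : EuclideanSpace ℝ (Fin d))
    (hN : ∀ X : EuclideanSpace ℝ (Fin d),
        fderiv ℝ F ξ X = 0 → fderiv ℝ (fun η => fderiv ℝ F η) ξ X = 0 → X = 0) :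
    (∀ X : EuclideanSpace ℝ (Fin d),
        fderiv ℝ (fun η => fderiv ℝ F η) ξ X = 0 → X = 0) ∨
    (∀ X : EuclideanSpace ℝ (Fin d), fderiv ℝ F ξ X = 0 →
        fderiv ℝ (fun η => fderiv ℝ F η) ξ X ∈ Submodule.span ℝ {fderiv ℝ F ξ} → X = 0) := by
  by_cases hK : ∀ X : EuclideanSpace ℝ (Fin d),
      fderiv ℝ (fun η => fderiv ℝ F η) ξ X = 0 → X = 0
  · exact Or.inl hK
  · right
    push_neg at hK
    obtain ⟨X, hX0, hXne⟩ := hK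
    -- F'(ξ) X ≠ 0, otherwise N would give X = 0
    have hFX : fderiv ℝ F ξ X ≠ 0 := fun h => hXne (hN X h hX0)
    -- symmetry of the second derivative
    have hdiff : ∀ y, HasFDerivAt F (fderiv ℝ F y) y := fun y =>
      ((hF.differentiable (by norm_num)) y).hasFDerivAt
    have hdiff2 : HasFDerivAt (fun η => fderiv ℝ F η)
        (fderiv ℝ (fun η => fderiv ℝ F η) ξ) ξ := by
      have : DifferentiableAt ℝ (fun η => fderiv ℝ F η) ξ :=
        ((hF.fderiv_right (m := 1) (by norm_num)).differentiable (by norm_num)) ξ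
      exact this.hasFDerivAt
    have hsymm := second_derivative_symmetric hdiff hdiff2
    intro Y hY1 hY2
    rw [Submodule.mem_span_singleton] at hY2
    obtain ⟨c, hc⟩ := hY2
    have h1 : fderiv ℝ (fun η => fderiv ℝ F η) ξ Y X = 0 := by
      have := hsymm X Y
      rw [hX0] at this
      simpa using this.symm
    have h2 : c * fderiv ℝ F ξ X = 0 := by
      rw [← hc] at h1
      simpa using h1
    have hc0 : c = 0 := by
      rcases mul_eq_zero.mp h2 with h | h
      · exact h
      · exact absurd h hFX
    have hY0 : fderiv ℝ (fun η => fderiv ℝ F η) ξ Y = 0 := by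
      rw [← hc, hc0, zero_smul]
    exact hN Y hY1 hY0
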